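/- arXiv:2311.07837 — 5 statements merged into one kernel-verified Lean document; each statement's English description precedes it below -/
import Mathlib

section
/- Let N be a positive integer, D a negative integer with D ≡ 0 or 1 (mod 4), and Γ a subgroup of SL₂(ℤ) containing Γ₁(N). Suppose that for every form Q ∈ 𝒬(D,N) and every γ ∈ Γ, the form Q^γ again belongs to 𝒬(D,N). Then for every prime p dividing N such that (if p is odd) the Legendre symbol (D/p) ≠ −1, or (if p = 2) D ≢ 5 (mod 8), and for every matrix [[q,r],[s,t]] ∈ Γ, one has p ∣ s; that is, Γ is contained in Γ₀(M_{D,N}). -/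
open Matrix CongruenceSubgroup
open scoped MatrixGroups

/-- `ax² + bxy + cy²` belongs to `𝒬(D, N)`: primitive, positive definite of
discriminant `D`, with leading coefficient prime to `N`. -/
def IsFormClassForm (D : ℤ) (N : ℕ) (a b c : ℤ) : Prop :=
  Int.gcd a (Int.gcd b c : ℤ) = 1 ∧ b ^ 2 - 4 * a * c = D ∧ 0 < a ∧ Int.gcd a (N : ℤ) = 1

/-- The Kronecker symbol `(D/p)` is different from `-1`: for odd primes `p` this says the
Legendre symbol `(D/p) ≠ -1`, and for `p = 2` it says `D ≢ 5 (mod 8)`. -/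
def KronSymNeNegOne (D : ℤ) (p : ℕ) : Prop :=
  if p = 2 then ¬ D ≡ 5 [ZMOD 8] else ∀ _ : Fact p.Prime, legendreSym p D ≠ -1

lemma exists_principal_form (D : ℤ) (hD4 : D % 4 = 0 ∨ D % 4 = 1) (p : ℕ)
    (hp : p.Prime) (hK : KronSymNeNegOne D p) :
    ∃ b c : ℤ, b ^ 2 - 4 * c = D ∧ (p : ℤ) ∣ c := by
  by_cases hp2 : p = 2
  · subst hp2
    simp only [KronSymNeNegOne, if_pos rfl] at hK
    have hK' : ¬ (D % 8 = 5 % 8) := hK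
    have h8 : D % 8 = 0 ∨ D % 8 = 4 ∨ D % 8 = 1 := by omega
    rcases h8 with h | h | h
    · obtain ⟨k, hk⟩ : ∃ k, D = 8 * k := ⟨D / 8, by omega⟩
      exact ⟨0, -2 * k, by rw [hk]; ring, ⟨-k, by push_cast; ring⟩⟩
    · obtain ⟨k, hk⟩ : ∃ k, D = 8 * k + 4 := ⟨D / 8, by omega⟩
      exact ⟨2, -2 * k, by rw [hk]; ring, ⟨-k, by push_cast; ring⟩⟩
    · obtain ⟨k, hk⟩ : ∃ k, D = 8 * k + 1 := ⟨D / 8, by omega⟩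
      exact ⟨1, -2 * k, by rw [hk]; ring, ⟨-k, by push_cast; ring⟩⟩
  · haveI : Fact p.Prime := ⟨hp⟩
    simp only [KronSymNeNegOne, if_neg hp2] at hK
    have hsq : IsSquare (D : ZMod p) := by
      by_contra h
      exact hK ⟨hp⟩ ((legendreSym.eq_neg_one_iff p).mpr h)
    obtain ⟨x, hx⟩ := hsq
    have hb₀ : (p : ℤ) ∣ (x.val : ℤ) ^ 2 - D := by
      rw [← ZMod.intCast_zmod_eq_zero_iff_dvd]
      push_cast
      rw [ZMod.natCast_val, ZMod.cast_id, hx]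
      ring
    -- choose b with right parity
    obtain ⟨b, hbp, hbpar⟩ : ∃ b : ℤ, (p : ℤ) ∣ b ^ 2 - D ∧ (2 : ℤ) ∣ b - D := by
      by_cases he : (2 : ℤ) ∣ (x.val : ℤ) - D
      · exact ⟨(x.val : ℤ), hb₀, he⟩
      · refine ⟨(x.val : ℤ) + p, ?_, ?_⟩
        · have : ((x.val : ℤ) + p) ^ 2 - D = ((x.val : ℤ) ^ 2 - D) + p * (2 * (x.val : ℤ) + p) := by
            ring
          rw [this]; exact dvd_add hb₀ (Dvd.intro _ rfl)
        · obtain ⟨m, hm⟩ := hp.odd_of_ne_two hp2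
          omega
    -- 4 ∣ b^2 - D
    obtain ⟨k, hk⟩ := hbpar
    have hb : b = D + 2 * k := by omega
    have h4 : (4 : ℤ) ∣ b ^ 2 - D := by
      rcases hD4 with h | h
      · obtain ⟨m, hm⟩ : ∃ m, D = 4 * m := ⟨D / 4, by omega⟩
        exact ⟨4 * m ^ 2 + 4 * m * k + k ^ 2 - m, by rw [hb, hm]; ring⟩
      · obtain ⟨m, hm⟩ : ∃ m, D = 4 * m + 1 := ⟨D / 4, by omega⟩
        exact ⟨4 * m ^ 2 + m + (4 * m + 1) * k + k ^ 2, by rw [hb, hm]; ring⟩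
    obtain ⟨c, hc⟩ := h4
    refine ⟨b, c, by omega, ?_⟩
    have hpZ : Prime (p : ℤ) := Int.prime_iff_natAbs_prime.mpr (by simpa using hp)
    have h4c : (p : ℤ) ∣ 4 * c := hc ▸ hbp
    rcases hpZ.dvd_mul.mp h4c with h | h
    · exfalso
      have h4' : p ∣ 4 := by exact_mod_cast h
      have h2 : p ∣ 2 ^ 2 := by norm_num at h4' ⊢; exact h4'
      exact hp2 ((Nat.prime_dvd_prime_iff_eq hp Nat.prime_two).mp (hp.dvd_of_dvd_pow h2))
    · exact h

/-- If `Γ ⊇ Γ₁(N)` acts on `𝒬(D, N)`, i.e. `Q^γ ∈ 𝒬(D, N)` for all `Q ∈ 𝒬(D, N)` and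
`γ = [[q,r],[s,t]] ∈ Γ`, then `Γ ⊆ Γ₀(M_{D,N})`: every prime `p ∣ N` with Kronecker
symbol `(D/p) ≠ -1` divides the lower-left entry `s` of every element of `Γ`. -/
theorem le_Gamma0_of_acts_on_forms (N : ℕ) (hN : 0 < N)
    (D : ℤ) (hD : D < 0) (hD4 : D % 4 = 0 ∨ D % 4 = 1)
    (Γ : Subgroup SL(2, ℤ)) (hΓ : Gamma1 N ≤ Γ)
    (hact : ∀ a b c : ℤ, IsFormClassForm D N a b c → ∀ γ ∈ Γ,
      IsFormClassForm D N
        (a * (γ 0 0) ^ 2 + b * (γ 0 0) * (γ 1 0) + c * (γ 1 0) ^ 2)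
        (2 * a * (γ 0 0) * (γ 0 1) + b * ((γ 0 0) * (γ 1 1) + (γ 0 1) * (γ 1 0))
          + 2 * c * (γ 1 0) * (γ 1 1))
        (a * (γ 0 1) ^ 2 + b * (γ 0 1) * (γ 1 1) + c * (γ 1 1) ^ 2)) :
    ∀ γ ∈ Γ, ∀ p : ℕ, p.Prime → p ∣ N → KronSymNeNegOne D p → (p : ℤ) ∣ γ 1 0 := by
  intro γ hγ p hp hpN hK
  by_contra hps
  haveI : Fact p.Prime := ⟨hp⟩
  obtain ⟨b, c, hbc, hpc⟩ := exists_principal_form D hD4 p hp hK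
  have hform : IsFormClassForm D N 1 b c := by
    refine ⟨by simp, by linarith, one_pos, by simp⟩
  -- choose n with p ∣ γ 0 0 + n * γ 1 0
  have hs0 : ((γ 1 0 : ℤ) : ZMod p) ≠ 0 := by
    rw [Ne, ZMod.intCast_zmod_eq_zero_iff_dvd]; exact hps
  set u : ZMod p := (-((γ 0 0 : ℤ) : ZMod p)) * (((γ 1 0 : ℤ) : ZMod p))⁻¹ with hu
  set n : ℤ := (u.val : ℤ) with hn
  have hdiv : (p : ℤ) ∣ γ 0 0 + n * γ 1 0 := by
    rw [← ZMod.intCast_zmod_eq_zero_iff_dvd]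
    push_cast [hn]
    rw [ZMod.natCast_val, ZMod.cast_id, hu]
    field_simp
    ring
  -- the unipotent matrix U = [[1, n], [0, 1]]
  set U : SL(2, ℤ) := ⟨!![1, n; 0, 1], by simp [Matrix.det_fin_two_of]⟩ with hU
  have hUmem : U ∈ Gamma1 N := by
    rw [Gamma1_mem]
    simp [hU]
  set γ' : SL(2, ℤ) := U * γ with hγ'
  have hγ'mem : γ' ∈ Γ := Γ.mul_mem (hΓ hUmem) hγ
  have e00 : γ' 0 0 = γ 0 0 + n * γ 1 0 := by
    rw [hγ', show (U * γ).1 = U.1 * γ.1 from rfl]; simp [hU, Matrix.mul_apply, Fin.sum_univ_two]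
  have e10 : γ' 1 0 = γ 1 0 := by
    rw [hγ', show (U * γ).1 = U.1 * γ.1 from rfl]; simp [hU, Matrix.mul_apply, Fin.sum_univ_two]
  obtain ⟨-, -, -, hgcd⟩ := hact 1 b c hform γ' hγ'mem
  -- p divides the new leading coefficient
  have hpa : (p : ℤ) ∣ 1 * (γ' 0 0) ^ 2 + b * (γ' 0 0) * (γ' 1 0) + c * (γ' 1 0) ^ 2 := by
    rw [e00, e10]
    have h1 : (p : ℤ) ∣ 1 * (γ 0 0 + n * γ 1 0) ^ 2 := by
      rw [one_mul, sq]; exact hdiv.mul_right _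
    have h2 : (p : ℤ) ∣ b * (γ 0 0 + n * γ 1 0) * γ 1 0 := (hdiv.mul_left b).mul_right _
    exact dvd_add (dvd_add h1 h2) (hpc.mul_right _)
  have hpN' : (p : ℤ) ∣ (N : ℤ) := Int.natCast_dvd_natCast.mpr hpN
  have hcop : IsCoprime (1 * (γ' 0 0) ^ 2 + b * (γ' 0 0) * (γ' 1 0) + c * (γ' 1 0) ^ 2) (N : ℤ) :=
    Int.isCoprime_iff_gcd_eq_one.mpr hgcd
  have : IsUnit ((p : ℤ)) := hcop.isUnit_of_dvd' hpa hpN'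
  rw [Int.isUnit_iff] at this
  have := hp.two_le
  omega
end

section
/- Let N be a positive integer, D a negative integer with D ≡ 0 or 1 (mod 4), and Γ a subgroup of SL₂(ℤ) containing Γ₁(N). Suppose that for every matrix [[q,r],[s,t]] ∈ Γ and every prime p dividing N with (if p odd) the Legendre symbol (D/p) ≠ −1, or (if p = 2) D ≢ 5 (mod 8), one has p ∣ s (i.e., Γ ⊆ Γ₀(M_{D,N})). Then for every form Q ∈ 𝒬(D,N) and every γ ∈ Γ, the form Q^γ again belongs to 𝒬(D,N). -/
open Matrix CongruenceSubgroup
open scoped MatrixGroups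

/- Auxiliary mod 8 facts for the `p = 2` case, by decidability. -/
lemma zmod8_l1 : ∀ A B Q S : ZMod 8,
    (2*(2*A+1)*(2*Q+1) + (2*B+1)*S)^2 ≠ 5*S^2 := by decide

lemma zmod8_l2 : ∀ A B Q S : ZMod 8,
    (2*(2*A+1)*Q + (2*B+1)*(2*S+1))^2 ≠ 5*(2*S+1)^2 := by decide

/-- Main arithmetic core: the leading coefficient of the transformed form remains
coprime to `N`. -/
lemma helper_coprime (N : ℕ) (hN : 0 < N) (D a b c q r s t : ℤ)
    (hdet : q * t - r * s = 1)
    (hdisc : b ^ 2 - 4 * a * c = D)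
    (haN : Int.gcd a (N : ℤ) = 1)
    (hdvd : ∀ p : ℕ, p.Prime → p ∣ N → KronSymNeNegOne D p → (p : ℤ) ∣ s) :
    Int.gcd (a * q ^ 2 + b * q * s + c * s ^ 2) (N : ℤ) = 1 := by
  set A := a * q ^ 2 + b * q * s + c * s ^ 2 with hA
  have key : 4 * a * A = (2 * a * q + b * s) ^ 2 - D * s ^ 2 := by
    rw [hA]; linear_combination (-(s ^ 2)) * hdisc
  by_contra hg
  have hg0 : Int.gcd A (N : ℤ) ≠ 0 := by
    intro h0
    rw [Int.gcd_eq_zero_iff] at h0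
    exact absurd h0.2 (by exact_mod_cast hN.ne')
  obtain ⟨p, hp, hpg⟩ := Nat.exists_prime_and_dvd hg
  haveI : Fact p.Prime := ⟨hp⟩
  have hpz : Prime (p : ℤ) := Nat.prime_iff_prime_int.mp hp
  have hpN : p ∣ N := by
    have h2 : ((Int.gcd A (N : ℤ) : ℤ)) ∣ (N : ℤ) := Int.gcd_dvd_right _ _
    have h3 : (p : ℤ) ∣ (N : ℤ) := (Int.natCast_dvd_natCast.mpr hpg).trans h2
    exact_mod_cast h3
  have hpA : (p : ℤ) ∣ A := (Int.natCast_dvd_natCast.mpr hpg).trans (Int.gcd_dvd_left _ _)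
  have hpa : ¬ (p : ℤ) ∣ a := by
    intro hd
    have h4 : (p : ℤ) ∣ (Int.gcd a (N : ℤ) : ℤ) :=
      Int.dvd_coe_gcd hd (Int.natCast_dvd_natCast.mpr hpN)
    rw [haN] at h4
    have := Int.le_of_dvd one_pos h4
    have := hp.two_le
    omega
  have contra : (p : ℤ) ∣ q → (p : ℤ) ∣ s → False := by
    intro hq hs
    have h1 : (p : ℤ) ∣ 1 := hdet ▸ dvd_sub (hq.mul_right t) (hs.mul_left r)
    have := Int.le_of_dvd one_pos h1
    have := hp.two_le
    omega
  by_cases hk : KronSymNeNegOne D p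
  · -- `p ∣ s` by hypothesis; then `p ∣ a q²`, forcing `p ∣ q`, contradiction.
    have hps : (p : ℤ) ∣ s := hdvd p hp hpN hk
    have haq : (p : ℤ) ∣ a * q ^ 2 := by
      have e : a * q ^ 2 = A - s * (b * q + c * s) := by rw [hA]; ring
      rw [e]; exact dvd_sub hpA (hps.mul_right _)
    rcases hpz.dvd_mul.mp haq with h | h
    · exact hpa h
    · exact contra (hpz.dvd_of_dvd_pow h) hps
  · have hp4A : (p : ℤ) ∣ (2 * a * q + b * s) ^ 2 - D * s ^ 2 :=
      key ▸ (hpA.mul_left (4 * a))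
    by_cases hp2 : p = 2
    · -- p = 2 and D ≡ 5 (mod 8)
      subst hp2
      have hpa' : ¬ (2 : ℤ) ∣ a := by simpa using hpa
      have hD8 : D ≡ 5 [ZMOD 8] := by
        rw [KronSymNeNegOne, if_pos rfl, not_not] at hk
        exact hk
      have hD8' : D % 8 = 5 % 8 := hD8
      have hb : ¬ (2:ℤ) ∣ b := by
        rintro ⟨k, hkk⟩
        have e : D = 4 * (k ^ 2 - a * c) := by rw [← hdisc, hkk]; ring
        omega
      have hqs : ¬ ((2:ℤ) ∣ q ∧ (2:ℤ) ∣ s) := by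
        rintro ⟨h1, h2⟩
        exact contra (by exact_mod_cast h1) (by exact_mod_cast h2)
      obtain ⟨k, hkk⟩ := hpA
      have h8 : ((8:ℕ) : ℤ) ∣ (2 * a * q + b * s) ^ 2 - D * s ^ 2 := by
        refine ⟨a * k, ?_⟩
        rw [← key, hkk]; push_cast; ring
      have hz0 : (((2 * a * q + b * s) ^ 2 - D * s ^ 2 : ℤ) : ZMod 8) = 0 :=
        (ZMod.intCast_zmod_eq_zero_iff_dvd _ 8).mpr h8
      have hDz : ((D : ℤ) : ZMod 8) = 5 := by
        have := (ZMod.intCast_eq_intCast_iff D 5 8).mpr (by exact_mod_cast hD8)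
        simpa using this
      have hz : ((2:ZMod 8) * a * q + b * s) ^ 2 = 5 * (s : ZMod 8) ^ 2 := by
        rw [← hDz]
        push_cast at hz0
        linear_combination hz0
      obtain ⟨a1, ha1⟩ : ∃ x, a = 2*x+1 := ⟨a/2, by omega⟩
      obtain ⟨b1, hb1⟩ : ∃ x, b = 2*x+1 := ⟨b/2, by omega⟩
      by_cases hq2 : (2:ℤ) ∣ q
      · have hs2 : ¬ (2:ℤ) ∣ s := fun h => hqs ⟨hq2, h⟩
        obtain ⟨s1, hs1⟩ : ∃ x, s = 2*x+1 := ⟨s/2, by omega⟩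
        rw [ha1, hb1, hs1] at hz
        push_cast at hz
        exact zmod8_l2 (a1 : ZMod 8) (b1 : ZMod 8) (q : ZMod 8) (s1 : ZMod 8)
          (by linear_combination hz)
      · obtain ⟨q1, hq1⟩ : ∃ x, q = 2*x+1 := ⟨q/2, by omega⟩
        rw [ha1, hb1, hq1] at hz
        push_cast at hz
        exact zmod8_l1 (a1 : ZMod 8) (b1 : ZMod 8) (q1 : ZMod 8) (s : ZMod 8)
          (by linear_combination hz)
    · -- p odd, Legendre symbol (D/p) = -1
      have hleg : legendreSym p D = -1 := by
        by_contra h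
        exact hk (by rw [KronSymNeNegOne, if_neg hp2]; exact fun _ => h)
      have hz0 : (((2 * a * q + b * s) ^ 2 - D * s ^ 2 : ℤ) : ZMod p) = 0 :=
        (ZMod.intCast_zmod_eq_zero_iff_dvd _ p).mpr hp4A
      have hz : (((2 * a * q + b * s : ℤ)) : ZMod p) ^ 2
          = (D : ZMod p) * ((s : ℤ) : ZMod p) ^ 2 := by
        push_cast at hz0 ⊢
        linear_combination hz0
      have hs0 : ((s : ℤ) : ZMod p) = 0 := by
        by_contra hs
        set x : ZMod p := ((2 * a * q + b * s : ℤ) : ZMod p) with hxdef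
        set y : ZMod p := ((s : ℤ) : ZMod p) with hydef
        have hy : y * y⁻¹ = 1 := mul_inv_cancel₀ hs
        have hsq : IsSquare ((D : ℤ) : ZMod p) := by
          refine ⟨x * y⁻¹, ?_⟩
          have e1 : x * y⁻¹ * (x * y⁻¹) = x ^ 2 * (y⁻¹ * y⁻¹) := by ring
          rw [e1, hz]
          have e2 : (D : ZMod p) * y ^ 2 * (y⁻¹ * y⁻¹)
              = (D : ZMod p) * ((y * y⁻¹) * (y * y⁻¹)) := by ring
          rw [e2, hy]
          ring
        exact (legendreSym.eq_neg_one_iff p).mp hleg hsq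
      have hps : (p : ℤ) ∣ s := (ZMod.intCast_zmod_eq_zero_iff_dvd _ p).mp hs0
      have hx2 : (p : ℤ) ∣ (2 * a * q + b * s) ^ 2 := by
        have : (2 * a * q + b * s) ^ 2
            = ((2 * a * q + b * s) ^ 2 - D * s ^ 2) + s * (D * s) := by ring
        rw [this]
        exact dvd_add hp4A (hps.mul_right _)
      have hx : (p : ℤ) ∣ 2 * a * q + b * s := hpz.dvd_of_dvd_pow hx2
      have h2aq : (p : ℤ) ∣ 2 * a * q := by
        have : 2 * a * q = (2 * a * q + b * s) - s * b := by ring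
        rw [this]
        exact dvd_sub hx (hps.mul_right _)
      have hp2' : ¬ (p : ℤ) ∣ 2 := by
        intro h
        have := Int.le_of_dvd two_pos h
        have h2 := hp.two_le
        have : p = 2 := by omega
        exact hp2 this
      rcases hpz.dvd_mul.mp h2aq with h | h
      · rcases hpz.dvd_mul.mp h with h' | h'
        · exact hp2' h'
        · exact hpa h'
      · exact contra h hps

/-- If `Γ ⊇ Γ₁(N)` is contained in `Γ₀(M_{D,N})`, i.e. every prime `p ∣ N` with Kronecker
symbol `(D/p) ≠ -1` divides the lower-left entry of every `γ ∈ Γ`, then `Γ` acts on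
`𝒬(D, N)`: `Q^γ ∈ 𝒬(D, N)` for all `Q ∈ 𝒬(D, N)` and `γ = [[q,r],[s,t]] ∈ Γ`. -/
theorem acts_on_forms_of_le_Gamma0 (N : ℕ) (hN : 0 < N)
    (D : ℤ) (hD : D < 0) (hD4 : D % 4 = 0 ∨ D % 4 = 1)
    (Γ : Subgroup SL(2, ℤ)) (hΓ : Gamma1 N ≤ Γ)
    (hle : ∀ γ ∈ Γ, ∀ p : ℕ, p.Prime → p ∣ N → KronSymNeNegOne D p → (p : ℤ) ∣ γ 1 0) :
    ∀ a b c : ℤ, IsFormClassForm D N a b c → ∀ γ ∈ Γ,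
      IsFormClassForm D N
        (a * (γ 0 0) ^ 2 + b * (γ 0 0) * (γ 1 0) + c * (γ 1 0) ^ 2)
        (2 * a * (γ 0 0) * (γ 0 1) + b * ((γ 0 0) * (γ 1 1) + (γ 0 1) * (γ 1 0))
          + 2 * c * (γ 1 0) * (γ 1 1))
        (a * (γ 0 1) ^ 2 + b * (γ 0 1) * (γ 1 1) + c * (γ 1 1) ^ 2) := by
  intro a b c habc γ hγ
  obtain ⟨hprim, hdisc, ha, haN⟩ := habc
  set q := γ 0 0 with hq
  set r := γ 0 1 with hr
  set s := γ 1 0 with hs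
  set t := γ 1 1 with ht
  have hdet : q * t - r * s = 1 := by
    have h := γ.det_coe
    rw [Matrix.det_fin_two] at h
    exact h
  set A := a * q ^ 2 + b * q * s + c * s ^ 2 with hA
  set B := 2 * a * q * r + b * (q * t + r * s) + 2 * c * s * t with hB
  set C := a * r ^ 2 + b * r * t + c * t ^ 2 with hC
  have idA : A * t ^ 2 - B * s * t + C * s ^ 2 = a := by
    rw [hA, hB, hC]; linear_combination (a * (q * t - r * s + 1)) * hdet
  have idB : -2 * A * r * t + B * (q * t + r * s) - 2 * C * q * s = b := by
    rw [hA, hB, hC]; linear_combination (b * (q * t - r * s + 1)) * hdet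
  have idC : A * r ^ 2 - B * q * r + C * q ^ 2 = c := by
    rw [hA, hB, hC]; linear_combination (c * (q * t - r * s + 1)) * hdet
  refine ⟨?_, ?_, ?_, ?_⟩
  · -- primitivity
    set g := Int.gcd A (Int.gcd B C : ℤ) with hg
    have hgA : (g : ℤ) ∣ A := Int.gcd_dvd_left _ _
    have hgBC : (g : ℤ) ∣ (Int.gcd B C : ℤ) := Int.gcd_dvd_right _ _
    have hgB : (g : ℤ) ∣ B := hgBC.trans (Int.gcd_dvd_left _ _)
    have hgC : (g : ℤ) ∣ C := hgBC.trans (Int.gcd_dvd_right _ _)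
    have hga : (g : ℤ) ∣ a := by
      have e : a = A * t ^ 2 + B * (-(s * t)) + C * s ^ 2 := by rw [← idA]; ring
      rw [e]
      exact dvd_add (dvd_add (hgA.mul_right _) (hgB.mul_right _)) (hgC.mul_right _)
    have hgb : (g : ℤ) ∣ b := by
      have e : b = A * (-(2 * r * t)) + B * (q * t + r * s) + C * (-(2 * q * s)) := by
        rw [← idB]; ring
      rw [e]
      exact dvd_add (dvd_add (hgA.mul_right _) (hgB.mul_right _)) (hgC.mul_right _)
    have hgc : (g : ℤ) ∣ c := by
      have e : c = A * r ^ 2 + B * (-(q * r)) + C * q ^ 2 := by rw [← idC]; ring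
      rw [e]
      exact dvd_add (dvd_add (hgA.mul_right _) (hgB.mul_right _)) (hgC.mul_right _)
    have h1 : (g : ℤ) ∣ (Int.gcd a (Int.gcd b c : ℤ) : ℤ) :=
      Int.dvd_coe_gcd hga (Int.dvd_coe_gcd hgb hgc)
    rw [hprim] at h1
    have h2 : (0 : ℤ) ≤ g := Int.natCast_nonneg g
    have := Int.le_of_dvd one_pos h1
    have h3 : (1 : ℤ) ≤ g ∨ (g : ℤ) = 0 := by omega
    rcases h3 with h3 | h3
    · have : (g : ℤ) = 1 := le_antisymm this h3
      exact_mod_cast this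
    · exfalso
      have hg0 : g = 0 := by exact_mod_cast h3
      rw [hg, Int.gcd_eq_zero_iff] at hg0
      have hA0 : A = 0 := hg0.1
      have hBC : Int.gcd B C = 0 := by exact_mod_cast hg0.2
      rw [Int.gcd_eq_zero_iff] at hBC
      have := idA
      rw [hA0, hBC.1, hBC.2] at this
      simp at this
      omega
  · -- discriminant
    rw [hA, hB, hC]
    linear_combination ((b ^ 2 - 4 * a * c) * (q * t - r * s + 1)) * hdet + hdisc
  · -- positivity
    have key : 4 * a * A = (2 * a * q + b * s) ^ 2 - D * s ^ 2 := by
      rw [hA]; linear_combination (-(s ^ 2)) * hdisc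
    by_cases hs0 : s = 0
    · have hq1 : q * t = 1 := by rw [hs0] at hdet; linarith [hdet]
      have hq2 : q ^ 2 = 1 := by
        rcases Int.eq_one_or_neg_one_of_mul_eq_one hq1 with h | h <;> rw [h] <;> ring
      have eA : A = a * q ^ 2 := by rw [hA, hs0]; ring
      rw [eA, hq2, mul_one]
      exact ha
    · have hsq : (0:ℤ) < s ^ 2 := lt_of_le_of_ne (sq_nonneg s) (Ne.symm (pow_ne_zero 2 hs0))
      have hDs : (0:ℤ) < -D * s ^ 2 := mul_pos (neg_pos.mpr hD) hsq
      have h4 : (0:ℤ) < 4 * a * A := by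
        rw [key]
        nlinarith [sq_nonneg (2 * a * q + b * s), hDs]
      by_contra hA0
      push_neg at hA0
      have h5 : 4 * a * A ≤ 0 :=
        mul_nonpos_of_nonneg_of_nonpos (by linarith) hA0
      linarith
  · -- coprimality with N
    exact helper_coprime N hN D a b c q r s t hdet hdisc haN
      (fun p pp hpN hk => hle γ hγ p pp hpN hk)
end

section
/- Let N be a positive integer, D a negative integer with D ≡ 0 or 1 (mod 4), and Γ a subgroup of SL₂(ℤ) containing Γ₁(N). Then Γ acts on 𝒬(D,N) (i.e., for every Q ∈ 𝒬(D,N) and γ ∈ Γ the form Q^γ belongs to 𝒬(D,N)) if and only if Γ is contained in Γ₀(M_{D,N}), i.e., if and only if for every [[q,r],[s,t]] ∈ Γ, every prime p dividing N with Kronecker symbol (D/p) ≠ −1 divides s. -/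
open Matrix CongruenceSubgroup
open scoped MatrixGroups

lemma aux_gcd_eq_one (a : ℤ) (N : ℕ)
    (h : ∀ p : ℕ, p.Prime → p ∣ N → ¬ (p : ℤ) ∣ a) : Int.gcd a (N : ℤ) = 1 := by
  by_contra hg
  have hp := Nat.minFac_prime hg
  set p := (Int.gcd a (N : ℤ)).minFac with hpdef
  have hpg : p ∣ Int.gcd a (N : ℤ) := Nat.minFac_dvd _
  have hpa : (p : ℤ) ∣ a := dvd_trans (Int.natCast_dvd_natCast.mpr hpg) (Int.gcd_dvd_left _ _)
  have hpN : (p : ℤ) ∣ (N : ℤ) := dvd_trans (Int.natCast_dvd_natCast.mpr hpg) (Int.gcd_dvd_right _ _)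
  exact h p hp (Int.natCast_dvd_natCast.mp hpN) hpa

lemma aux_not_dvd (a : ℤ) (N : ℕ) (hg : Int.gcd a (N : ℤ) = 1)
    (p : ℕ) (hp : p.Prime) (hpN : p ∣ N) : ¬ (p : ℤ) ∣ a := by
  intro hpa
  have : (p : ℤ) ∣ (Int.gcd a (N : ℤ) : ℤ) :=
    Int.dvd_coe_gcd hpa (Int.natCast_dvd_natCast.mpr hpN)
  rw [hg] at this
  have := Nat.le_of_dvd one_pos (Int.natCast_dvd_natCast.mp this)
  have h2 := hp.two_le
  omega

/-- Key construction: a form `x² + b₀xy + cy²` of discriminant `D` with `p ∣ Q(q,s)`. -/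
lemma aux_construct (D : ℤ) (hD4 : D % 4 = 0 ∨ D % 4 = 1)
    (p : ℕ) (hp : p.Prime) (hK : KronSymNeNegOne D p)
    (q s : ℤ) (hs : ¬ (p : ℤ) ∣ s) :
    ∃ b₀ c : ℤ, b₀ ^ 2 - 4 * 1 * c = D ∧ (p : ℤ) ∣ (1 * q ^ 2 + b₀ * q * s + c * s ^ 2) := by
  by_cases hp2 : p = 2
  · subst hp2
    rw [KronSymNeNegOne, if_pos rfl] at hK
    have hD8 : D % 8 ≠ 5 := by
      intro h; exact hK (show D % 8 = 5 % 8 by omega)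
    have hs1 : (s : ZMod 2) = 1 := by
      have : (s : ZMod 2) ≠ 0 := by
        rwa [Ne, ZMod.intCast_zmod_eq_zero_iff_dvd]
      revert this; generalize (s : ZMod 2) = x; revert x; decide
    rcases hD4 with hD0 | hD1
    · -- D ≡ 0 mod 4
      obtain ⟨e, he⟩ : (4 : ℤ) ∣ D := by omega
      refine ⟨2 * (q + e), (q + e) ^ 2 - e, by linear_combination -he, ?_⟩
      rw [← ZMod.intCast_zmod_eq_zero_iff_dvd]
      push_cast
      rw [hs1]
      generalize (q : ZMod 2) = x
      generalize (e : ZMod 2) = y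
      revert x y; decide
    · -- D ≡ 1 mod 8
      obtain ⟨k, hk⟩ : (8 : ℤ) ∣ (1 - D) := by omega
      refine ⟨1, 2 * k, by linarith, ?_⟩
      rw [← ZMod.intCast_zmod_eq_zero_iff_dvd]
      push_cast
      rw [hs1]
      generalize (q : ZMod 2) = x
      generalize (k : ZMod 2) = y
      revert x y; decide
  · -- p odd
    haveI : Fact p.Prime := ⟨hp⟩
    rw [KronSymNeNegOne, if_neg hp2] at hK
    have hleg : legendreSym p D ≠ -1 := hK ⟨hp⟩
    have hsq : IsSquare ((D : ℤ) : ZMod p) := by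
      by_contra hns
      exact hleg ((legendreSym.eq_neg_one_iff p).mpr hns)
    obtain ⟨β, hβ⟩ := hsq
    have hs0 : (s : ZMod p) ≠ 0 := by
      rwa [Ne, ZMod.intCast_zmod_eq_zero_iff_dvd]
    set w : ZMod p := (β * (s : ZMod p) - 2 * (q : ZMod p)) * (s : ZMod p)⁻¹ with hw
    set b₀ : ℤ := (w.val : ℤ) + p * ((w.val : ℤ) + D) with hb₀
    -- b₀ ≡ D (mod 2)
    obtain ⟨m, hm⟩ := hp.odd_of_ne_two hp2
    have hpar : (2 : ℤ) ∣ (b₀ - D) := by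
      refine ⟨(m + 1) * (w.val : ℤ) + m * D, ?_⟩
      have : (p : ℤ) = 2 * m + 1 := by exact_mod_cast congrArg (Nat.cast : ℕ → ℤ) hm
      rw [hb₀, this]; ring
    obtain ⟨j, hj⟩ := hpar
    have h4 : (4 : ℤ) ∣ (b₀ ^ 2 - D) := by
      have hDD : (4 : ℤ) ∣ D * (D - 1) := by
        rcases hD4 with h | h
        · obtain ⟨u, hu⟩ : (4 : ℤ) ∣ D := by omega
          exact ⟨u * (D - 1), by rw [hu]; ring⟩
        · obtain ⟨u, hu⟩ : (4 : ℤ) ∣ (D - 1) := by omega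
          exact ⟨D * u, by rw [hu]; ring⟩
      obtain ⟨u4, hu4⟩ := hDD
      have hbD : b₀ = D + 2 * j := by linarith
      exact ⟨u4 + j * (D + j), by linear_combination hu4 + (b₀ + D + 2 * j) * hbD⟩
    obtain ⟨c, hc⟩ := h4
    refine ⟨b₀, c, by linarith, ?_⟩
    have key : (4 : ℤ) * (1 * q ^ 2 + b₀ * q * s + c * s ^ 2)
        = (2 * q + b₀ * s) ^ 2 - D * s ^ 2 := by linear_combination (-(s ^ 2)) * hc
    rw [← ZMod.intCast_zmod_eq_zero_iff_dvd]
    have h2p : ((2 : ℕ) : ZMod p) ≠ 0 := by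
      rw [Ne, ZMod.natCast_eq_zero_iff]
      intro h
      exact hp2 ((Nat.prime_dvd_prime_iff_eq hp Nat.prime_two).mp h)
    have h4p : ((4 : ℤ) : ZMod p) ≠ 0 := by
      have : ((4 : ℤ) : ZMod p) = ((2:ℕ) : ZMod p) * ((2:ℕ) : ZMod p) := by push_cast; ring
      rw [this]
      exact mul_ne_zero h2p h2p
    have hb₀cast : ((b₀ : ℤ) : ZMod p) = w := by
      rw [hb₀]; push_cast [ZMod.natCast_val, ZMod.cast_id, ZMod.natCast_self]; ring
    have keyc : ((4 : ℤ) : ZMod p) * ((1 * q ^ 2 + b₀ * q * s + c * s ^ 2 : ℤ) : ZMod p) = 0 := by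
      have := congrArg (fun z : ℤ => (z : ZMod p)) key
      push_cast at this ⊢
      rw [this]
      push_cast at hb₀cast
      rw [hb₀cast, hw]
      have hinv : ((s : ZMod p))⁻¹ * (s : ZMod p) = 1 := inv_mul_cancel₀ hs0
      have hβD : ((D : ℤ) : ZMod p) = β * β := hβ
      field_simp
      linear_combination (-(s : ZMod p) ^ 2) * hβD
    rcases mul_eq_zero.mp keyc with h | h
    · exact absurd h h4p
    · exact h

/-- **Proposition 6.4.** A subgroup `Γ ⊇ Γ₁(N)` of `SL₂(ℤ)` acts on `𝒬(D, N)` (i.e.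
`Q^γ ∈ 𝒬(D, N)` for all `Q ∈ 𝒬(D, N)`, `γ ∈ Γ`) if and only if `Γ ⊆ Γ₀(M_{D,N})`,
i.e. every prime `p ∣ N` with Kronecker symbol `(D/p) ≠ -1` divides the lower-left
entry of every element of `Γ`. -/
theorem acts_on_forms_iff_le_Gamma0 (N : ℕ) (hN : 0 < N)
    (D : ℤ) (hD : D < 0) (hD4 : D % 4 = 0 ∨ D % 4 = 1)
    (Γ : Subgroup SL(2, ℤ)) (hΓ : Gamma1 N ≤ Γ) :
    (∀ a b c : ℤ, IsFormClassForm D N a b c → ∀ γ ∈ Γ,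
      IsFormClassForm D N
        (a * (γ 0 0) ^ 2 + b * (γ 0 0) * (γ 1 0) + c * (γ 1 0) ^ 2)
        (2 * a * (γ 0 0) * (γ 0 1) + b * ((γ 0 0) * (γ 1 1) + (γ 0 1) * (γ 1 0))
          + 2 * c * (γ 1 0) * (γ 1 1))
        (a * (γ 0 1) ^ 2 + b * (γ 0 1) * (γ 1 1) + c * (γ 1 1) ^ 2)) ↔
      (∀ γ ∈ Γ, ∀ p : ℕ, p.Prime → p ∣ N → KronSymNeNegOne D p → (p : ℤ) ∣ γ 1 0) := by
  constructor
  · -- forward: the action forces the congruence condition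
    intro h γ hγ p hp hpN hK
    by_contra hs
    obtain ⟨b₀, c, hdiscc, hdvd⟩ := aux_construct D hD4 p hp hK (γ 0 0) (γ 1 0) hs
    have hform : IsFormClassForm D N 1 b₀ c :=
      ⟨by simp [Int.gcd], hdiscc, one_pos, by simp [Int.gcd]⟩
    have h2 := (h 1 b₀ c hform γ hγ).2.2.2
    refine aux_not_dvd _ N h2 p hp hpN ?_
    have e : 1 * (γ 0 0) ^ 2 + b₀ * (γ 0 0) * (γ 1 0) + c * (γ 1 0) ^ 2
        = 1 * (γ 0 0) ^ 2 + b₀ * (γ 0 0) * (γ 1 0) + c * (γ 1 0) ^ 2 := rfl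
    exact hdvd
  · intro h a b c hQ γ hγ
    obtain ⟨hprim, hdisc, hapos, hacop⟩ := hQ
    set q : ℤ := γ 0 0 with hq
    set r : ℤ := γ 0 1 with hr
    set s : ℤ := γ 1 0 with hsdef
    set t : ℤ := γ 1 1 with ht
    have hdet : q * t - r * s = 1 := by
      have hd := Matrix.SpecialLinearGroup.det_coe γ
      rw [Matrix.det_fin_two] at hd
      exact hd
    set a' : ℤ := a * q ^ 2 + b * q * s + c * s ^ 2 with ha'
    set b' : ℤ := 2 * a * q * r + b * (q * t + r * s) + 2 * c * s * t with hb'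
    set c' : ℤ := a * r ^ 2 + b * r * t + c * t ^ 2 with hc'
    have key : 4 * a * a' = (2 * a * q + b * s) ^ 2 - D * s ^ 2 := by
      rw [ha']; linear_combination (-(s ^ 2)) * hdisc
    refine ⟨?_, ?_, ?_, ?_⟩
    · -- primitivity
      have hA : a = a' * t ^ 2 - b' * s * t + c' * s ^ 2 := by
        rw [ha', hb', hc']; linear_combination (-(a * (q * t - r * s + 1))) * hdet
      have hB : b = -2 * a' * r * t + b' * (q * t + r * s) - 2 * c' * q * s := by
        rw [ha', hb', hc']; linear_combination (-(b * (q * t - r * s + 1))) * hdet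
      have hC : c = a' * r ^ 2 - b' * q * r + c' * q ^ 2 := by
        rw [ha', hb', hc']; linear_combination (-(c * (q * t - r * s + 1))) * hdet
      set g : ℕ := Int.gcd a' (Int.gcd b' c' : ℤ) with hg
      have hga' : (g : ℤ) ∣ a' := Int.gcd_dvd_left _ _
      have hgb' : (g : ℤ) ∣ b' :=
        dvd_trans (Int.gcd_dvd_right _ _) (Int.gcd_dvd_left _ _)
      have hgc' : (g : ℤ) ∣ c' :=
        dvd_trans (Int.gcd_dvd_right _ _) (Int.gcd_dvd_right _ _)
      have hgA : (g : ℤ) ∣ a := by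
        rw [hA]
        exact dvd_add (dvd_sub (hga'.mul_right _) ((hgb'.mul_right _).mul_right _))
          (hgc'.mul_right _)
      have hgB : (g : ℤ) ∣ b := by
        rw [hB]
        exact dvd_sub (dvd_add (((hga'.mul_left _).mul_right _).mul_right _)
          (hgb'.mul_right _)) (((hgc'.mul_left _).mul_right _).mul_right _)
      have hgC : (g : ℤ) ∣ c := by
        rw [hC]
        exact dvd_add (dvd_sub (hga'.mul_right _) ((hgb'.mul_right _).mul_right _))
          (hgc'.mul_right _)
      have : (g : ℤ) ∣ (Int.gcd a (Int.gcd b c : ℤ) : ℤ) :=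
        Int.dvd_coe_gcd hgA (Int.dvd_coe_gcd hgB hgC)
      rw [hprim] at this
      exact Nat.dvd_one.mp (by exact_mod_cast this)
    · -- discriminant
      have hid : b' ^ 2 - 4 * a' * c' = (q * t - r * s) ^ 2 * (b ^ 2 - 4 * a * c) := by
        rw [ha', hb', hc']; ring
      rw [hid, hdet, one_pow, one_mul, hdisc]
    · -- positivity
      rcases eq_or_ne s 0 with hs0 | hs0
      · have hqt : q * t = 1 := by rw [hs0] at hdet; linarith
        have hq1 : q = 1 ∨ q = -1 := Int.eq_one_or_neg_one_of_mul_eq_one hqt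
        rw [ha', hs0]
        rcases hq1 with h1 | h1 <;> rw [h1] <;> ring_nf <;> linarith
      · have hs2 : 1 ≤ s ^ 2 := by
          have h0 : 0 ≤ s ^ 2 := sq_nonneg s
          have hne : s ^ 2 ≠ 0 := pow_ne_zero 2 hs0
          omega
        nlinarith [key, sq_nonneg (2 * a * q + b * s), hapos, hD, hs2]
    · -- gcd with N
      apply aux_gcd_eq_one
      intro p hp hpN hpa'
      have hpa : ¬ (p : ℤ) ∣ a := aux_not_dvd a N hacop p hp hpN
      have hprime : Prime (p : ℤ) := Nat.prime_iff_prime_int.mp hp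
      by_cases hK : KronSymNeNegOne D p
      · have hps : (p : ℤ) ∣ s := h γ hγ p hp hpN hK
        have hmain : (p : ℤ) ∣ a * q ^ 2 := by
          have e : a * q ^ 2 = a' - s * (b * q + c * s) := by rw [ha']; ring
          rw [e]
          exact dvd_sub hpa' (hps.mul_right _)
        rcases hprime.dvd_mul.mp hmain with hcase | hcase
        · exact hpa hcase
        · have hpq : (p : ℤ) ∣ q := hprime.dvd_of_dvd_pow hcase
          have : (p : ℤ) ∣ (1 : ℤ) := by
            rw [← hdet]
            exact dvd_sub (hpq.mul_right t) (hps.mul_left r)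
          have := Int.le_of_dvd one_pos this
          have h2 := hp.two_le
          omega
      · by_cases hp2 : p = 2
        · subst hp2
          rw [KronSymNeNegOne, if_pos rfl, not_not] at hK
          have hD8 : D % 8 = 5 := by
            have h5 := hK
            unfold Int.ModEq at h5
            omega
          have ha2 : ¬ (2 : ℤ) ∣ a := hpa
          have hb2 : ¬ (2 : ℤ) ∣ b := by
            rintro ⟨b₁, hb₁⟩
            have : (4 : ℤ) ∣ D := ⟨b₁ ^ 2 - a * c, by linear_combination -hdisc + (b + 2 * b₁) * hb₁⟩
            omega
          have hc2 : ¬ (2 : ℤ) ∣ c := by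
            rintro ⟨c₁, hcc⟩
            have hbodd : Odd b := Int.not_even_iff_odd.mp (fun he => hb2 he.two_dvd)
            obtain ⟨b₁, hb₁⟩ := hbodd
            obtain ⟨w, hw⟩ := Int.even_mul_succ_self b₁
            have h8 : (8 : ℤ) ∣ D - 1 :=
              ⟨w - a * c₁, by linear_combination -hdisc + (b + 2 * b₁ + 1) * hb₁ + (-4 * a) * hcc + 4 * hw⟩
            omega
          -- now work mod 2
          have hone : ∀ x : ℤ, ¬ (2 : ℤ) ∣ x → ((x : ZMod 2) = 1) := by
            intro x hx
            have : (x : ZMod 2) ≠ 0 := by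
              rw [Ne, ZMod.intCast_zmod_eq_zero_iff_dvd]
              exact_mod_cast hx
            revert this; generalize (x : ZMod 2) = y; revert y; decide
          have hcast : ((a * q ^ 2 + b * q * s + c * s ^ 2 : ℤ) : ZMod 2) = 0 := by
            rw [ZMod.intCast_zmod_eq_zero_iff_dvd]
            exact_mod_cast hpa'
          have hdetc : ((q : ℤ) : ZMod 2) * ((t : ℤ) : ZMod 2)
              - ((r : ℤ) : ZMod 2) * ((s : ℤ) : ZMod 2) = 1 := by
            have := congrArg (fun z : ℤ => (z : ZMod 2)) hdet
            push_cast at this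
            exact_mod_cast this
          push_cast at hcast
          rw [hone a ha2, hone b hb2, hone c hc2] at hcast
          revert hcast hdetc
          generalize ((q : ℤ) : ZMod 2) = x
          generalize ((s : ℤ) : ZMod 2) = y
          generalize ((r : ℤ) : ZMod 2) = z
          generalize ((t : ℤ) : ZMod 2) = u
          revert x y z u
          decide
        · -- p odd, legendre symbol is -1
          haveI : Fact p.Prime := ⟨hp⟩
          rw [KronSymNeNegOne, if_neg hp2] at hK
          have hleg : legendreSym p D = -1 := by
            by_contra hne
            exact hK (fun _ => hne)
          have hns : ¬ IsSquare ((D : ℤ) : ZMod p) := (legendreSym.eq_neg_one_iff p).mp hleg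
          have hpa0 : ((a : ℤ) : ZMod p) ≠ 0 := by
            rw [Ne, ZMod.intCast_zmod_eq_zero_iff_dvd]; exact hpa
          have h2p : ((2 : ℕ) : ZMod p) ≠ 0 := by
            rw [Ne, ZMod.natCast_eq_zero_iff]
            exact fun hdvd => hp2 ((Nat.prime_dvd_prime_iff_eq hp Nat.prime_two).mp hdvd)
          have hcast : ((a' : ℤ) : ZMod p) = 0 := by
            rw [ZMod.intCast_zmod_eq_zero_iff_dvd]; exact hpa'
          have keyc : (0 : ZMod p)
              = (2 * ((a : ℤ) : ZMod p) * ((q : ℤ) : ZMod p)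
                  + ((b : ℤ) : ZMod p) * ((s : ℤ) : ZMod p)) ^ 2
                - ((D : ℤ) : ZMod p) * ((s : ℤ) : ZMod p) ^ 2 := by
            have h0 : ((4 * a * a' : ℤ) : ZMod p)
                = (((2 * a * q + b * s) ^ 2 - D * s ^ 2 : ℤ) : ZMod p) := by
              exact_mod_cast congrArg (fun z : ℤ => (z : ZMod p)) key
            push_cast at h0
            rw [hcast] at h0
            linear_combination h0
          by_cases hs0 : ((s : ℤ) : ZMod p) = 0
          · have h1 : (2 * ((a : ℤ) : ZMod p) * ((q : ℤ) : ZMod p)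
                + ((b : ℤ) : ZMod p) * ((s : ℤ) : ZMod p)) ^ 2 = 0 := by
              linear_combination (-1 : ZMod p) * keyc
                + (((D : ℤ) : ZMod p) * ((s : ℤ) : ZMod p)) * hs0
            have hzero := pow_eq_zero_iff (by norm_num : (2 : ℕ) ≠ 0) |>.mp h1
            rw [hs0, mul_zero, add_zero] at hzero
            have hq0 : ((q : ℤ) : ZMod p) = 0 := by
              rcases mul_eq_zero.mp hzero with h' | h'
              · rcases mul_eq_zero.mp h' with h'' | h''
                · exact absurd (by exact_mod_cast h'') h2p
                · exact absurd h'' hpa0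
              · exact h'
            have hdetc : ((q : ℤ) : ZMod p) * ((t : ℤ) : ZMod p)
                - ((r : ℤ) : ZMod p) * ((s : ℤ) : ZMod p) = 1 := by
              have := congrArg (fun z : ℤ => (z : ZMod p)) hdet
              push_cast at this
              exact_mod_cast this
            rw [hq0, hs0] at hdetc
            simp at hdetc
          · apply hns
            refine ⟨(2 * ((a : ℤ) : ZMod p) * ((q : ℤ) : ZMod p)
                + ((b : ℤ) : ZMod p) * ((s : ℤ) : ZMod p)) * ((s : ℤ) : ZMod p)⁻¹, ?_⟩
            have hinv : ((s : ℤ) : ZMod p)⁻¹ * ((s : ℤ) : ZMod p) = 1 := inv_mul_cancel₀ hs0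
            field_simp
            linear_combination keyc
end

section
/- Let N be a positive integer such that −1 is a quadratic residue modulo N, i.e., there exists an integer t with t² ≡ −1 (mod N). Let ζ ∈ ℂ be a primitive N-th root of unity and let D be a negative integer. Then no element x of the subfield ℚ(ζ) of ℂ satisfies x² = D. Equivalently, the N-th cyclotomic field contains no imaginary quadratic field. -/
set_option maxHeartbeats 1000000 in
/-- **Remark 2.3 (ii).** If `-1` is a quadratic residue modulo `N`, then the `N`-th
cyclotomic field `ℚ(ζ_N)` contains no square root of a negative integer `D`; in other
words, it contains no imaginary quadratic field. -/
theorem cyclotomic_no_imaginary_quadratic (N : ℕ) (hN : 0 < N)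
    (ht : ∃ t : ℤ, t ^ 2 ≡ -1 [ZMOD (N : ℤ)])
    (ζ : ℂ) (hζ : IsPrimitiveRoot ζ N) (D : ℤ) (hD : D < 0) :
    ∀ x ∈ IntermediateField.adjoin ℚ {ζ}, x ^ 2 ≠ (D : ℂ) := by
  obtain ⟨t, ht⟩ := ht
  intro x hx hx2
  haveI : NeZero N := ⟨hN.ne'⟩
  set n : ℕ+ := ⟨N, hN⟩ with hn
  have hζn : IsPrimitiveRoot ζ (n : ℕ) := hζ
  -- integrality of ζ
  have hint : IsIntegral ℚ ζ :=
    ⟨Polynomial.X ^ N - 1, Polynomial.monic_X_pow_sub_C 1 hN.ne', by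
      simp [hζ.pow_eq_one]⟩
  set K := IntermediateField.adjoin ℚ ({ζ} : Set ℂ) with hK
  -- cyclotomic extension instance
  haveI : IsCyclotomicExtension {(n : ℕ)} ℚ K := by
    have hsub := IntermediateField.adjoin_simple_toSubalgebra_of_isAlgebraic hint.isAlgebraic
    refine IsCyclotomicExtension.equiv _ _ _ (h := ?_)
      (.refl : K.toSubalgebra ≃ₐ[ℚ] _)
    rw [show K.toSubalgebra = Algebra.adjoin ℚ {ζ} from hsub]
    exact hζn.adjoin_isCyclotomicExtension ℚ
  set ζ' : K := ⟨ζ, IntermediateField.mem_adjoin_simple_self ℚ ζ⟩ with hζ'def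
  have hζ' : IsPrimitiveRoot ζ' (n : ℕ) := by
    rwa [← IsPrimitiveRoot.coe_submonoidClass_iff]
  have hirr : Irreducible (Polynomial.cyclotomic (n : ℕ) ℚ) :=
    Polynomial.cyclotomic.irreducible_rat hN
  -- the exponent m
  set m : ℕ := (t : ZMod N).val with hm
  have hmt : ((m : ℕ) : ZMod N) = (t : ZMod N) := by
    simp [hm, ZMod.natCast_val, ZMod.cast_id]
  have hdvd : (N : ℤ) ∣ t ^ 2 + 1 := by
    have h' := Int.ModEq.dvd ht
    have : -1 - t ^ 2 = -(t ^ 2 + 1) := by ring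
    rw [this, dvd_neg] at h'
    exact h'
  have htz : (t : ZMod N) ^ 2 = -1 := by
    have := (ZMod.intCast_zmod_eq_zero_iff_dvd (t ^ 2 + 1) N).mpr hdvd
    push_cast at this
    linear_combination this
  have hm2 : ((m ^ 2 + 1 : ℕ) : ZMod N) = 0 := by
    push_cast
    rw [hmt, htz]; ring
  have hNdvd : N ∣ m ^ 2 + 1 := (ZMod.natCast_eq_zero_iff _ _).mp hm2
  have hcop : m.Coprime N := by
    rw [← ZMod.isUnit_iff_coprime]
    rw [hmt]
    exact IsUnit.of_mul_eq_one (-(t : ZMod N)) (by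
      rw [← neg_mul_eq_mul_neg, ← sq, htz]; ring)
  have hζ'm : IsPrimitiveRoot (ζ' ^ m) (n : ℕ) := hζ'.pow_of_coprime m hcop
  -- the automorphism
  haveI : NeZero (((n : ℕ) : ℚ)) := ⟨by exact_mod_cast hN.ne'⟩
  have hmin : minpoly ℚ (hζ'.powerBasis ℚ).gen = minpoly ℚ (hζ'm.powerBasis ℚ).gen := by
    rw [hζ'.powerBasis_gen ℚ, hζ'm.powerBasis_gen ℚ,
      ← hζ'.minpoly_eq_cyclotomic_of_irreducible hirr,
      ← hζ'm.minpoly_eq_cyclotomic_of_irreducible hirr]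
  set σ : K ≃ₐ[ℚ] K := (hζ'.powerBasis ℚ).equivOfMinpoly (hζ'm.powerBasis ℚ) hmin with hσ
  have hσζ : σ ζ' = ζ' ^ m := by
    have := (hζ'.powerBasis ℚ).equivOfMinpoly_gen (hζ'm.powerBasis ℚ) hmin
    rwa [hζ'.powerBasis_gen ℚ, hζ'm.powerBasis_gen ℚ] at this
  have hone : ζ' ^ N = 1 := hζ'.pow_eq_one
  have hσσζ : σ (σ ζ') * ζ' = 1 := by
    rw [hσζ, map_pow, hσζ, ← pow_mul, ← sq, ← pow_succ]
    obtain ⟨c, hc⟩ := hNdvd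
    rw [hc, pow_mul, hone, one_pow]
  -- x as an element of K
  set x' : K := ⟨x, hx⟩ with hx'
  have hx'2 : x' ^ 2 = (D : K) := by
    have : ((x' ^ 2 : K) : ℂ) = (((D : K)) : ℂ) := by push_cast; exact hx2
    exact_mod_cast this
  have hσx2 : (σ x') ^ 2 = x' ^ 2 := by
    rw [← map_pow, hx'2, map_intCast]
  have hσσx : σ (σ x') = x' := by
    rcases sq_eq_sq_iff_eq_or_eq_neg.mp hσx2 with h | h
    · rw [h, h]
    · rw [h, map_neg, h, neg_neg]
  -- the two algebra maps K →ₐ[ℚ] ℂ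
  have hconjζ : (starRingEnd ℂ) ζ = ζ⁻¹ :=
    (Complex.inv_eq_conj (hζ.norm'_eq_one hN.ne')).symm
  have hfg : (K.val.comp ((σ.trans σ).toAlgHom)) =
      ((Complex.conjAe.restrictScalars ℚ).toAlgHom.comp K.val) :=
    (hζ'.powerBasis ℚ).algHom_ext (by
      rw [hζ'.powerBasis_gen ℚ]
      show ((σ (σ ζ') : K) : ℂ) = (starRingEnd ℂ) (ζ' : ℂ)
      rw [show ((ζ' : K) : ℂ) = ζ from rfl, hconjζ]
      refine eq_inv_of_mul_eq_one_left ?_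
      have := congrArg (fun y : K => (y : ℂ)) hσσζ
      push_cast at this
      exact this)
  have hx_eq : (x : ℂ) = (starRingEnd ℂ) x := by
    have h := DFunLike.congr_fun hfg x'
    have h' : ((σ (σ x') : K) : ℂ) = (starRingEnd ℂ) x := h
    rwa [hσσx] at h'
  -- x is real, contradiction
  have him : x.im = 0 := Complex.conj_eq_iff_im.mp hx_eq.symm
  have hre : (x.re : ℂ) = x := Complex.conj_eq_iff_re.mp hx_eq.symm
  have : (x.re : ℝ) ^ 2 = (D : ℝ) := by
    have : ((x.re : ℂ)) ^ 2 = ((D : ℝ) : ℂ) := by rw [hre, hx2]; norm_num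
    exact_mod_cast this
  have hDR : (D : ℝ) < 0 := by exact_mod_cast hD
  nlinarith [sq_nonneg x.re]
end

section
/- Let N be a positive integer and D a negative integer with D ≡ 0 or 1 (mod 4). Then the set G = { a mod N ∈ (ℤ/Nℤ)ˣ : there exist integers a, b, c with gcd(a,b,c)=1, b²−4ac=D, a>0, gcd(a,N)=1 reducing to this class }, i.e., the set of residue classes modulo N of leading coefficients of forms in 𝒬(D,N), is a subgroup of (ℤ/Nℤ)ˣ. -/
private lemma prime_not_dvd_all {q : ℕ} (hq : q.Prime) {a b c : ℤ}
    (h : Int.gcd a (Int.gcd b c : ℤ) = 1) (ha : (q:ℤ) ∣ a) (hb : (q:ℤ) ∣ b) (hc : (q:ℤ) ∣ c) :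
    False := by
  have h1 : (q:ℤ) ∣ (Int.gcd b c : ℤ) := Int.dvd_coe_gcd hb hc
  have h2 : (q:ℤ) ∣ (Int.gcd a (Int.gcd b c : ℤ) : ℤ) := Int.dvd_coe_gcd ha h1
  rw [h] at h2
  have : q ∣ 1 := by exact_mod_cast h2
  exact hq.ne_one (Nat.dvd_one.mp this)

private lemma exists_forall_prime_not_dvd (f : ℤ → ℤ) (hf : ∀ t t' : ℤ, (t - t') ∣ (f t - f t')) :
    ∀ m : ℕ, m ≠ 0 → (∀ p : ℕ, p.Prime → p ∣ m → ∃ t, ¬ (p:ℤ) ∣ f t) →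
    ∃ t, ∀ p : ℕ, p.Prime → p ∣ m → ¬ (p:ℤ) ∣ f t := by
  intro m
  induction m using Nat.strong_induction_on with
  | _ m ih =>
    intro hm0 h
    by_cases hm1 : m = 1
    · subst hm1
      exact ⟨0, fun p hp hpm => absurd (Nat.dvd_one.mp hpm) hp.ne_one⟩
    · have hp : m.minFac.Prime := Nat.minFac_prime hm1
      have hpm : m.minFac ∣ m := Nat.minFac_dvd m
      set p := m.minFac with hpdef
      set m' := ordCompl[p] m with hm'def
      have hm'dvd : m' ∣ m := Nat.ordCompl_dvd m p
      have hm'0 : m' ≠ 0 := (Nat.ordCompl_pos p hm0).ne'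
      have hlt : m' < m := by
        have hk : 0 < m.factorization p := hp.factorization_pos_of_dvd hm0 hpm
        have h1 : 1 < p ^ m.factorization p := Nat.one_lt_pow hk.ne' hp.one_lt
        have h2 := Nat.ordProj_mul_ordCompl_eq_self m p
        calc m' < p ^ m.factorization p * m' := by
              exact (Nat.lt_mul_iff_one_lt_left (Nat.pos_of_ne_zero hm'0)).mpr h1
          _ = m := h2
      obtain ⟨t', ht'⟩ := ih m' hlt hm'0 (fun q hq hqm' => h q hq (hqm'.trans hm'dvd))
      obtain ⟨tp, htp⟩ := h p hp hpm
      have hcop : Nat.Coprime p m' := Nat.coprime_ordCompl hp hm0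
      obtain ⟨u, v, huv⟩ := Nat.isCoprime_iff_coprime.mpr hcop.symm
      refine ⟨t' + (m':ℤ) * (u * (tp - t')), ?_⟩
      intro q hq hqm hdvd
      by_cases hqp : q = p
      · subst hqp
        apply htp
        have hdt : (p:ℤ) ∣ (t' + (m':ℤ) * (u * (tp - t')) - tp) := by
          refine ⟨-((tp - t')*v), ?_⟩
          linear_combination (tp - t') * huv
        have h3 : (p:ℤ) ∣ f (t' + (m':ℤ) * (u * (tp - t'))) - f tp :=
          hdt.trans (hf _ tp)
        have := hdvd.sub h3
        simpa using this
      · have hqm'2 : q ∣ m' := by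
          have hqpk : Nat.Coprime q (p ^ m.factorization p) :=
            (Nat.Coprime.pow_right _ ((Nat.coprime_primes hq hp).mpr hqp))
          have hd : q ∣ p ^ m.factorization p * m' := by
            rw [Nat.ordProj_mul_ordCompl_eq_self]; exact hqm
          exact hqpk.dvd_of_dvd_mul_left hd
        apply ht' q hq hqm'2
        have hdt : (q:ℤ) ∣ (t' + (m':ℤ) * (u * (tp - t')) - t') := by
          have hqm'z : (q:ℤ) ∣ (m':ℤ) := Int.natCast_dvd_natCast.mpr hqm'2
          have : t' + (m':ℤ) * (u * (tp - t')) - t' = (m':ℤ) * (u * (tp - t')) := by ring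
          rw [this]
          exact hqm'z.mul_right _
        have h3 : (q:ℤ) ∣ f (t' + (m':ℤ) * (u * (tp - t'))) - f t' := hdt.trans (hf _ t')
        have := hdvd.sub h3
        simpa using this

private lemma exists_isCoprime_val (f : ℤ → ℤ) (hf : ∀ t t' : ℤ, (t - t') ∣ (f t - f t'))
    (M : ℤ) (hM : M ≠ 0)
    (h : ∀ p : ℕ, p.Prime → (p:ℤ) ∣ M → ∃ t, ¬ (p:ℤ) ∣ f t) :
    ∃ t, IsCoprime (f t) M := by
  have hMnat : M.natAbs ≠ 0 := by simpa using hM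
  obtain ⟨t, ht⟩ := exists_forall_prime_not_dvd f hf M.natAbs hMnat
    (fun p hp hpm => h p hp ((Int.natCast_dvd_natCast.mpr hpm).trans (Int.natAbs_dvd.mpr dvd_rfl)))
  refine ⟨t, Int.isCoprime_iff_gcd_eq_one.mpr ?_⟩
  by_contra hg
  obtain ⟨q, hq, hqg⟩ := Nat.exists_prime_and_dvd hg
  have hqf : (q:ℤ) ∣ f t := (Int.natCast_dvd_natCast.mpr hqg).trans ((Int.gcd_dvd_left _ _))
  have hqM : (q:ℤ) ∣ M := (Int.natCast_dvd_natCast.mpr hqg).trans ((Int.gcd_dvd_right _ _))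
  exact ht q hq (Int.natCast_dvd_natCast.mp ((Int.dvd_natAbs).mpr hqM)) hqf


private lemma exists_param_odd (p : ℕ) (hp : p.Prime) (hp2 : p ≠ 2) (a b c N s : ℤ)
    (hN : ¬ (p:ℤ) ∣ N) (hs : ¬ (p:ℤ) ∣ s)
    (habc : ¬ ((p:ℤ) ∣ a ∧ (p:ℤ) ∣ b ∧ (p:ℤ) ∣ c)) :
    ∃ t : ℤ, ¬ (p:ℤ) ∣ (a*(1+N*t)^2 + b*(1+N*t)*(s*N) + c*(s*N)^2) := by
  haveI : Fact p.Prime := ⟨hp⟩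
  by_contra hcon
  push_neg at hcon
  apply habc
  have hNz : ((N:ℤ) : ZMod p) ≠ 0 := by
    rwa [Ne, ZMod.intCast_zmod_eq_zero_iff_dvd]
  have hsz : ((s:ℤ) : ZMod p) ≠ 0 := by
    rwa [Ne, ZMod.intCast_zmod_eq_zero_iff_dvd]
  have key : ∀ ξ : ZMod p,
      (a : ZMod p)*ξ^2 + (b : ZMod p)*((s : ZMod p)*(N : ZMod p))*ξ
        + (c : ZMod p)*((s : ZMod p)*(N : ZMod p))^2 = 0 := by
    intro ξ
    obtain ⟨t, ht⟩ := ZMod.intCast_surjective (n := p) ((ξ - 1) * ((N:ℤ) : ZMod p)⁻¹)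
    have h1 : ((1 + N*t : ℤ) : ZMod p) = ξ := by
      push_cast
      rw [ht]
      field_simp
      ring
    have hz : ((a*(1+N*t)^2 + b*(1+N*t)*(s*N) + c*(s*N)^2 : ℤ) : ZMod p) = 0 :=
      (ZMod.intCast_zmod_eq_zero_iff_dvd _ _).mpr (hcon t)
    push_cast at hz
    push_cast at h1
    rw [h1] at hz
    linear_combination hz
  have h2ne : (2 : ZMod p) ≠ 0 := by
    intro h2
    have : ((2:ℕ) : ZMod p) = 0 := by exact_mod_cast h2
    rw [ZMod.natCast_eq_zero_iff] at this
    exact hp2 ((Nat.prime_dvd_prime_iff_eq hp Nat.prime_two).mp this)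
  have hsN : ((s : ZMod p)*(N : ZMod p)) ≠ 0 := mul_ne_zero hsz hNz
  have k0 := key 0
  have k1 := key 1
  have km := key (-1)
  have hC : (c : ZMod p) * ((s : ZMod p)*(N : ZMod p))^2 = 0 := by linear_combination k0
  have hA : (a : ZMod p) = 0 := by
    have h2a : (2 : ZMod p) * (a : ZMod p) = 0 := by linear_combination k1 + km - 2*hC
    rcases mul_eq_zero.mp h2a with h | h
    · exact absurd h h2ne
    · exact h
  have hB : (b : ZMod p) = 0 := by
    have hb' : (b : ZMod p) * ((s : ZMod p)*(N : ZMod p)) = 0 := by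
      linear_combination k1 - hC - hA
    rcases mul_eq_zero.mp hb' with h | h
    · exact h
    · exact absurd h hsN
  have hCc : (c : ZMod p) = 0 := by
    rcases mul_eq_zero.mp hC with h | h
    · exact h
    · exact absurd (pow_eq_zero_iff (by norm_num) |>.mp h) hsN
  refine ⟨?_, ?_, ?_⟩ <;> rw [← ZMod.intCast_zmod_eq_zero_iff_dvd] <;> assumption

private lemma transform (D a b c x y : ℤ) (hdisc : b^2 - 4*a*c = D)
    (hprim : Int.gcd a (Int.gcd b c : ℤ) = 1)
    (ha : 0 < a) (hD : D < 0) (hxy : IsCoprime x y) :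
    ∃ B C : ℤ, Int.gcd (a*x^2+b*x*y+c*y^2) (Int.gcd B C : ℤ) = 1 ∧
      B^2 - 4*(a*x^2+b*x*y+c*y^2)*C = D ∧ 0 < a*x^2+b*x*y+c*y^2 := by
  obtain ⟨u, v, huv⟩ := hxy
  set w := u with hw
  set z := -v with hz
  have huni : x*w - y*z = 1 := by rw [hw, hz]; linear_combination huv
  set A := a*x^2+b*x*y+c*y^2 with hA
  set B := 2*a*x*z + b*(x*w + y*z) + 2*c*y*w with hB
  set C := a*z^2 + b*z*w + c*w^2 with hC
  have hpos : 0 < A := by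
    have hkey : 4*a*A = (2*a*x+b*y)^2 - D*y^2 := by
      rw [hA]; linear_combination (-(y^2))*hdisc
    by_cases hy : y = 0
    · have hx1 : x*w = 1 := by rw [← huni, hy]; ring
      have : x = 1 ∨ x = -1 := Int.isUnit_iff.mp (IsUnit.of_mul_eq_one w hx1)
      have hx2 : x^2 = 1 := by rcases this with h | h <;> rw [h] <;> ring
      have : A = a := by rw [hA, hy, hx2]; ring
      rw [this]; exact ha
    · have hy2 : 1 ≤ y^2 := by
        have : 0 < y^2 := by positivity
        omega
      have h4 : 0 < 4*a*A := by nlinarith [sq_nonneg (2*a*x+b*y)]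
      nlinarith
  refine ⟨B, C, ?_, ?_, hpos⟩
  · set d := Int.gcd A (Int.gcd B C : ℤ) with hd
    have hdA : (d:ℤ) ∣ A := (Int.gcd_dvd_left _ _)
    have hdBC : (d:ℤ) ∣ (Int.gcd B C : ℤ) := (Int.gcd_dvd_right _ _)
    have hdB : (d:ℤ) ∣ B := hdBC.trans (Int.gcd_dvd_left _ _)
    have hdC : (d:ℤ) ∣ C := hdBC.trans (Int.gcd_dvd_right _ _)
    have hda : (d:ℤ) ∣ a := by
      have hid : a = A*w^2 + (B*(-(y*w)) + C*y^2) := by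
        rw [hA, hB, hC]; linear_combination (-(a*(x*w - y*z + 1)))*huni
      rw [hid]
      exact dvd_add (hdA.mul_right _) (dvd_add (hdB.mul_right _) (hdC.mul_right _))
    have hdb : (d:ℤ) ∣ b := by
      have hid : b = A*(-(2*z*w)) + (B*(x*w+y*z) + C*(-(2*x*y))) := by
        rw [hA, hB, hC]; linear_combination (-(b*(x*w - y*z + 1)))*huni
      rw [hid]
      exact dvd_add (hdA.mul_right _) (dvd_add (hdB.mul_right _) (hdC.mul_right _))
    have hdc : (d:ℤ) ∣ c := by
      have hid : c = A*z^2 + (B*(-(x*z)) + C*x^2) := by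
        rw [hA, hB, hC]; linear_combination (-(c*(x*w - y*z + 1)))*huni
      rw [hid]
      exact dvd_add (hdA.mul_right _) (dvd_add (hdB.mul_right _) (hdC.mul_right _))
    have h1 : (d:ℤ) ∣ (Int.gcd a (Int.gcd b c : ℤ) : ℤ) :=
      Int.dvd_coe_gcd hda (Int.dvd_coe_gcd hdb hdc)
    rw [hprim] at h1
    have : d ∣ 1 := by exact_mod_cast h1
    exact Nat.dvd_one.mp this
  · have hid : B^2 - 4*A*C = (b^2 - 4*a*c)*(x*w - y*z)^2 := by
      rw [hA, hB, hC]; ring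
    rw [hid, huni, hdisc]; ring


private lemma compose (D a₁ b₁ c₁ A₂ B₂ C₂ : ℤ)
    (h₁ : b₁^2 - 4*a₁*c₁ = D) (h₂ : B₂^2 - 4*A₂*C₂ = D)
    (hp₁ : Int.gcd a₁ (Int.gcd b₁ c₁ : ℤ) = 1) (hp₂ : Int.gcd A₂ (Int.gcd B₂ C₂ : ℤ) = 1)
    (hcop : IsCoprime a₁ A₂) (hA₂ : A₂ ≠ 0) :
    ∃ b C : ℤ, Int.gcd (a₁*A₂) (Int.gcd b C : ℤ) = 1 ∧ b^2 - 4*(a₁*A₂)*C = D := by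
  -- parity: 2 ∣ B₂ - b₁
  have h4 : (4:ℤ) ∣ (b₁^2 - B₂^2) := ⟨a₁*c₁ - A₂*C₂, by linarith⟩
  have h2 : (2:ℤ) ∣ (B₂ - b₁) := by
    have h2' : (2:ℤ) ∣ (b₁ - B₂) * (b₁ + B₂) := by
      have : (2:ℤ) ∣ (4:ℤ) := ⟨2, by norm_num⟩
      exact (this.trans h4).trans (dvd_of_eq (by ring))
    rcases (Int.prime_two.dvd_mul.mp h2').symm with h | h
    · have : (2:ℤ) ∣ (b₁ + B₂) - 2*b₁ := h.sub ⟨b₁, by ring⟩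
      exact dvd_trans this (dvd_of_eq (by ring))
    · have : (2:ℤ) ∣ (0:ℤ) - (b₁ - B₂) := (dvd_zero 2).sub h
      exact dvd_trans this (dvd_of_eq (by ring))
  obtain ⟨r, hr⟩ := h2
  have hcops : IsCoprime A₂ a₁ := hcop.symm
  obtain ⟨u, v, huv⟩ := hcop
  -- common middle coefficient
  obtain ⟨k₁, hk₁⟩ : ∃ k, k = r*u := ⟨_, rfl⟩
  obtain ⟨k₂, hk₂⟩ : ∃ k, k = -(r*v) := ⟨_, rfl⟩
  obtain ⟨b, hb⟩ : ∃ b, b = b₁ + 2*a₁*k₁ := ⟨_, rfl⟩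
  have hbB : b = B₂ + 2*A₂*k₂ := by
    rw [hb, hk₁, hk₂]
    linear_combination 2*r*huv - hr
  obtain ⟨c₁', hc₁'⟩ : ∃ x, x = c₁ + b₁*k₁ + a₁*k₁^2 := ⟨_, rfl⟩
  obtain ⟨c₂', hc₂'⟩ : ∃ x, x = C₂ + B₂*k₂ + A₂*k₂^2 := ⟨_, rfl⟩
  have hd₁ : b^2 - 4*a₁*c₁' = D := by
    rw [hb, hc₁']; linear_combination h₁
  have hd₂ : b^2 - 4*A₂*c₂' = D := by
    rw [hbB, hc₂']; linear_combination h₂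
  have key : a₁ * c₁' = A₂ * c₂' := by linarith
  have hdvd : A₂ ∣ a₁ * c₁' := ⟨c₂', key⟩
  obtain ⟨C, hC⟩ := hcops.dvd_of_dvd_mul_left hdvd
  have hc₂'eq : c₂' = a₁ * C := by
    have : A₂ * c₂' = A₂ * (a₁ * C) := by rw [← key, hC]; ring
    exact mul_left_cancel₀ hA₂ this
  refine ⟨b, C, ?_, by linear_combination hd₁ + 4*a₁*hC⟩
  by_contra hg
  obtain ⟨q, hq, hqg⟩ := Nat.exists_prime_and_dvd hg
  have hqZ : Prime (q:ℤ) := (Int.prime_iff_natAbs_prime.mpr (by simpa using hq))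
  have hgl : ((Int.gcd (a₁*A₂) (Int.gcd b C : ℤ) : ℕ) : ℤ) ∣ a₁*A₂ := (Int.gcd_dvd_left _ _)
  have hgr : ((Int.gcd (a₁*A₂) (Int.gcd b C : ℤ) : ℕ) : ℤ) ∣ (Int.gcd b C : ℤ) := (Int.gcd_dvd_right _ _)
  have hqd : (q:ℤ) ∣ ((Int.gcd (a₁*A₂) (Int.gcd b C : ℤ) : ℕ) : ℤ) := Int.natCast_dvd_natCast.mpr hqg
  have hqaA : (q:ℤ) ∣ a₁*A₂ := hqd.trans hgl
  have hqb : (q:ℤ) ∣ b := (hqd.trans hgr).trans (Int.gcd_dvd_left _ _)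
  have hqC : (q:ℤ) ∣ C := (hqd.trans hgr).trans (Int.gcd_dvd_right _ _)
  rcases hqZ.dvd_mul.mp hqaA with hqa | hqA
  · -- q ∣ a₁, b, C ⇒ q ∣ b₁, c₁
    have hqb₁ : (q:ℤ) ∣ b₁ := by
      have : (q:ℤ) ∣ b - 2*a₁*k₁ := hqb.sub ((hqa.mul_left _).mul_right _)
      exact this.trans (dvd_of_eq (by rw [hb]; ring))
    have hqc₁' : (q:ℤ) ∣ c₁' := by
      rw [hC]; exact hqC.mul_left _
    have hqc₁ : (q:ℤ) ∣ c₁ := by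
      have : (q:ℤ) ∣ c₁' - b₁*k₁ - a₁*k₁^2 :=
        (hqc₁'.sub (hqb₁.mul_right _)).sub (hqa.mul_right _)
      exact this.trans (dvd_of_eq (by rw [hc₁']; ring))
    have hone : (q:ℤ) ∣ (Int.gcd a₁ (Int.gcd b₁ c₁ : ℤ) : ℤ) :=
      Int.dvd_coe_gcd hqa (Int.dvd_coe_gcd hqb₁ hqc₁)
    rw [hp₁] at hone
    exact hq.ne_one (Nat.dvd_one.mp (by exact_mod_cast hone))
  · have hqB₂ : (q:ℤ) ∣ B₂ := by
      have : (q:ℤ) ∣ b - 2*A₂*k₂ := hqb.sub ((hqA.mul_left _).mul_right _)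
      exact this.trans (dvd_of_eq (by rw [hbB]; ring))
    have hqc₂' : (q:ℤ) ∣ c₂' := by
      rw [hc₂'eq]; exact hqC.mul_left _
    have hqC₂ : (q:ℤ) ∣ C₂ := by
      have : (q:ℤ) ∣ c₂' - B₂*k₂ - A₂*k₂^2 :=
        (hqc₂'.sub (hqB₂.mul_right _)).sub (hqA.mul_right _)
      exact this.trans (dvd_of_eq (by rw [hc₂']; ring))
    have hone : (q:ℤ) ∣ (Int.gcd A₂ (Int.gcd B₂ C₂ : ℤ) : ℤ) :=
      Int.dvd_coe_gcd hqA (Int.dvd_coe_gcd hqB₂ hqC₂)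
    rw [hp₂] at hone
    exact hq.ne_one (Nat.dvd_one.mp (by exact_mod_cast hone))

private lemma isCoprime_two_of_not_dvd {x : ℤ} (h : ¬ (2:ℤ) ∣ x) : IsCoprime x 2 := by
  have h2 : x % 2 = 1 := by
    rcases Int.emod_two_eq_zero_or_one x with h0 | h1
    · exact absurd (Int.dvd_of_emod_eq_zero h0) h
    · exact h1
  have hde := Int.mul_ediv_add_emod x 2
  rw [h2] at hde
  exact ⟨1, -(x/2), by linarith⟩

private lemma exists_good_rep (N : ℕ) (a₁ a₂ b₂ c₂ : ℤ)
    (ha₁ : 0 < a₁) (hcop1 : Int.gcd a₁ (N:ℤ) = 1)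
    (hprim : Int.gcd a₂ (Int.gcd b₂ c₂ : ℤ) = 1) :
    ∃ x y : ℤ, (N:ℤ) ∣ (x - 1) ∧ (N:ℤ) ∣ y ∧ IsCoprime x y ∧
      IsCoprime (a₂*x^2 + b₂*x*y + c₂*y^2) a₁ := by
  have hpN : ∀ p : ℕ, p.Prime → (p:ℤ) ∣ a₁ → ¬ (p:ℤ) ∣ (N:ℤ) := by
    intro p hp hpa hpn
    have hd : (p:ℤ) ∣ (Int.gcd a₁ (N:ℤ) : ℤ) := Int.dvd_coe_gcd hpa hpn
    rw [hcop1] at hd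
    exact hp.ne_one (Nat.dvd_one.mp (by exact_mod_cast hd))
  have habc : ∀ p : ℕ, p.Prime → ¬ ((p:ℤ) ∣ a₂ ∧ (p:ℤ) ∣ b₂ ∧ (p:ℤ) ∣ c₂) := by
    intro p hp ⟨h1, h2, h3⟩
    exact prime_not_dvd_all hp hprim h1 h2 h3
  by_cases hc2 : (2:ℤ) ∣ a₁ ∧ (2:ℤ) ∣ (a₂ + b₂*(N:ℤ) + c₂*(N:ℤ)^2)
      ∧ (2:ℤ) ∣ (a₂*(1+(N:ℤ))^2 + b₂*(1+(N:ℤ))*(N:ℤ) + c₂*(N:ℤ)^2)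
  · -- bad parity case: use y = 2N
    obtain ⟨h2a₁, h0, h1⟩ := hc2
    have hNodd : ¬ (2:ℤ) ∣ (N:ℤ) := by
      have := hpN 2 Nat.prime_two (by exact_mod_cast h2a₁)
      exact_mod_cast this
    have ha₂odd : ¬ (2:ℤ) ∣ a₂ := by
      intro h2a₂
      -- 2 ∣ a₂ + b₂ (from h1 - h0 and N odd), hence 2 ∣ b₂, hence 2 ∣ c₂
      have hsub : (2:ℤ) ∣ ((N:ℤ)^2*(a₂+b₂) + 2*(a₂*(N:ℤ))) := by
        have := h1.sub h0
        exact this.trans (dvd_of_eq (by ring))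
      have hN2 : (2:ℤ) ∣ (N:ℤ)^2*(a₂+b₂) := by
        have := hsub.sub (Dvd.intro (a₂*(N:ℤ)) rfl)
        exact this.trans (dvd_of_eq (by ring))
      have hab : (2:ℤ) ∣ (a₂ + b₂) := by
        rcases Int.prime_two.dvd_mul.mp hN2 with h | h
        · exact absurd (Int.prime_two.dvd_of_dvd_pow h) hNodd
        · exact h
      have hb₂ : (2:ℤ) ∣ b₂ := by
        have := hab.sub h2a₂
        exact this.trans (dvd_of_eq (by ring))
      have hc₂ : (2:ℤ) ∣ c₂ := by
        have hcN : (2:ℤ) ∣ c₂*(N:ℤ)^2 := by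
          have := (h0.sub h2a₂).sub (hb₂.mul_right (N:ℤ))
          exact this.trans (dvd_of_eq (by ring))
        rcases Int.prime_two.dvd_mul.mp hcN with h | h
        · exact h
        · exact absurd (Int.prime_two.dvd_of_dvd_pow h) hNodd
      exact habc 2 Nat.prime_two ⟨by exact_mod_cast h2a₂, by exact_mod_cast hb₂, by exact_mod_cast hc₂⟩
    obtain ⟨t, hco⟩ := exists_isCoprime_val
        (fun t => a₂*(1+(N:ℤ)*t)^2 + b₂*(1+(N:ℤ)*t)*(2*(N:ℤ)) + c₂*(2*(N:ℤ))^2)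
        (fun t t' => ⟨a₂*(N:ℤ)*(2 + (N:ℤ)*t + (N:ℤ)*t') + 2*b₂*(N:ℤ)^2, by ring⟩)
        a₁ ha₁.ne'
        (by
          intro p hp hpa
          by_cases hp2 : p = 2
          · subst hp2
            refine ⟨0, ?_⟩
            intro hdvd
            apply ha₂odd
            have heq : a₂ = (a₂*(1+(N:ℤ)*0)^2 + b₂*(1+(N:ℤ)*0)*(2*(N:ℤ)) + c₂*(2*(N:ℤ))^2)
                - 2*(b₂*(N:ℤ) + 2*(c₂*(N:ℤ)^2)) := by ring
            rw [heq]
            exact (by exact_mod_cast hdvd : (2:ℤ) ∣ _).sub (dvd_mul_right 2 _)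
          · exact exists_param_odd p hp hp2 a₂ b₂ c₂ (N:ℤ) 2 (hpN p hp hpa)
              (fun hdd => hp2 ((Nat.prime_dvd_prime_iff_eq hp Nat.prime_two).mp
                (by exact_mod_cast hdd))) (habc p hp))
    refine ⟨1 + (N:ℤ)*t, 2*(N:ℤ), ⟨t, by ring⟩, ⟨2, by ring⟩, ?_, hco⟩
    -- coprimality of x and 2N
    have hxodd : ¬ (2:ℤ) ∣ (1 + (N:ℤ)*t) := by
      intro h2x
      have h2ft : (2:ℤ) ∣ (a₂*(1+(N:ℤ)*t)^2 + b₂*(1+(N:ℤ)*t)*(2*(N:ℤ)) + c₂*(2*(N:ℤ))^2) := by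
        have hterm : (2:ℤ) ∣ a₂*(1+(N:ℤ)*t)^2 :=
          ((h2x.mul_left (1+(N:ℤ)*t)).mul_left a₂).trans (dvd_of_eq (by ring))
        have : a₂*(1+(N:ℤ)*t)^2 + b₂*(1+(N:ℤ)*t)*(2*(N:ℤ)) + c₂*(2*(N:ℤ))^2
            = a₂*(1+(N:ℤ)*t)^2 + 2*(b₂*(1+(N:ℤ)*t)*(N:ℤ) + 2*(c₂*(N:ℤ)^2)) := by ring
        rw [this]
        exact dvd_add hterm (dvd_mul_right 2 _)
      obtain ⟨α, β, hαβ⟩ := hco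
      have : (2:ℤ) ∣ 1 := by
        rw [← hαβ]
        exact dvd_add (h2ft.mul_left α) (h2a₁.mul_left β)
      norm_num at this
    have hx2 : IsCoprime (1 + (N:ℤ)*t) 2 := isCoprime_two_of_not_dvd hxodd
    have hxN : IsCoprime (1 + (N:ℤ)*t) (N:ℤ) := by
      have := (isCoprime_one_left (x := (N:ℤ))).add_mul_right_left t
      exact this.of_isCoprime_of_dvd_left (dvd_of_eq (by ring))
    exact hx2.mul_right hxN
  · -- good parity case: use y = N
    obtain ⟨t, hco⟩ := exists_isCoprime_val
        (fun t => a₂*(1+(N:ℤ)*t)^2 + b₂*(1+(N:ℤ)*t)*(N:ℤ) + c₂*(N:ℤ)^2)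
        (fun t t' => ⟨a₂*(N:ℤ)*(2 + (N:ℤ)*t + (N:ℤ)*t') + b₂*(N:ℤ)^2, by ring⟩)
        a₁ ha₁.ne'
        (by
          intro p hp hpa
          by_cases hp2 : p = 2
          · subst hp2
            have h2a₁ : (2:ℤ) ∣ a₁ := by exact_mod_cast hpa
            by_cases hf0 : (2:ℤ) ∣ (a₂ + b₂*(N:ℤ) + c₂*(N:ℤ)^2)
            · have hnf1 : ¬ (2:ℤ) ∣ (a₂*(1+(N:ℤ))^2 + b₂*(1+(N:ℤ))*(N:ℤ) + c₂*(N:ℤ)^2) :=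
                fun h => hc2 ⟨h2a₁, hf0, h⟩
              refine ⟨1, ?_⟩
              intro h
              apply hnf1
              have heq : a₂*(1+(N:ℤ))^2 + b₂*(1+(N:ℤ))*(N:ℤ) + c₂*(N:ℤ)^2
                  = a₂*(1+(N:ℤ)*1)^2 + b₂*(1+(N:ℤ)*1)*(N:ℤ) + c₂*(N:ℤ)^2 := by ring
              rw [heq]
              exact_mod_cast h
            · refine ⟨0, ?_⟩
              intro h
              apply hf0
              have heq : a₂ + b₂*(N:ℤ) + c₂*(N:ℤ)^2
                  = a₂*(1+(N:ℤ)*0)^2 + b₂*(1+(N:ℤ)*0)*(N:ℤ) + c₂*(N:ℤ)^2 := by ring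
              rw [heq]
              exact_mod_cast h
          · obtain ⟨t, ht⟩ := exists_param_odd p hp hp2 a₂ b₂ c₂ (N:ℤ) 1 (hpN p hp hpa)
              (fun hdd => hp.ne_one (by exact_mod_cast Int.eq_one_of_dvd_one (by positivity) hdd))
              (habc p hp)
            exact ⟨t, by simpa using ht⟩)
    refine ⟨1 + (N:ℤ)*t, (N:ℤ), ⟨t, by ring⟩, ⟨1, by ring⟩, ?_, hco⟩
    have := (isCoprime_one_left (x := (N:ℤ))).add_mul_right_left t
    exact this.of_isCoprime_of_dvd_left (dvd_of_eq (by ring))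


/-- **Remark 2.3 (i).** The set of residue classes modulo `N` of leading coefficients of
forms in `𝒬(D, N)` is a subgroup of `(ℤ/Nℤ)ˣ`. -/
theorem leadingCoeff_classes_form_subgroup (N : ℕ) (hN : 0 < N)
    (D : ℤ) (hD : D < 0) (hD4 : D % 4 = 0 ∨ D % 4 = 1) :
    ∃ G : Subgroup (ZMod N)ˣ, (G : Set (ZMod N)ˣ) =
      {u : (ZMod N)ˣ | ∃ a b c : ℤ,
        Int.gcd a (Int.gcd b c : ℤ) = 1 ∧ b ^ 2 - 4 * a * c = D ∧ 0 < a ∧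
          Int.gcd a (N : ℤ) = 1 ∧ ((a : ZMod N) = (u : ZMod N))} := by
  haveI : NeZero N := ⟨hN.ne'⟩
  set S : Set (ZMod N)ˣ := {u : (ZMod N)ˣ | ∃ a b c : ℤ,
      Int.gcd a (Int.gcd b c : ℤ) = 1 ∧ b ^ 2 - 4 * a * c = D ∧ 0 < a ∧
        Int.gcd a (N : ℤ) = 1 ∧ ((a : ZMod N) = (u : ZMod N))} with hS
  have honeS : (1 : (ZMod N)ˣ) ∈ S := by
    rcases hD4 with h0 | h1
    · obtain ⟨e, he⟩ := Int.dvd_of_emod_eq_zero h0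
      exact ⟨1, 0, -e, by simp, by rw [he]; ring, one_pos, by simp, by simp⟩
    · have hde := Int.mul_ediv_add_emod D 4
      rw [h1] at hde
      exact ⟨1, 1, -(D/4), by simp, by linear_combination hde, one_pos, by simp, by simp⟩
  have hmulS : ∀ u₁ u₂ : (ZMod N)ˣ, u₁ ∈ S → u₂ ∈ S → u₁ * u₂ ∈ S := by
    rintro u₁ u₂ ⟨a₁, b₁, c₁, hprim₁, hdisc₁, ha₁, hgcd₁, hcast₁⟩
      ⟨a₂, b₂, c₂, hprim₂, hdisc₂, ha₂, hgcd₂, hcast₂⟩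
    obtain ⟨x, y, hx1, hy, hxy, hcoA⟩ := exists_good_rep N a₁ a₂ b₂ c₂ ha₁ hgcd₁ hprim₂
    obtain ⟨B₂, C₂, hprimA, hdiscA, hposA⟩ := transform D a₂ b₂ c₂ x y hdisc₂ hprim₂ ha₂ hD hxy
    set A₂ := a₂*x^2 + b₂*x*y + c₂*y^2 with hA₂
    obtain ⟨b, C, hprimF, hdiscF⟩ :=
      compose D a₁ b₁ c₁ A₂ B₂ C₂ hdisc₁ hdiscA hprim₁ hprimA hcoA.symm hposA.ne'
    obtain ⟨d₁, hd₁⟩ := hx1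
    obtain ⟨d₂, hd₂⟩ := hy
    have heqA : A₂ = a₂ + (a₂*(d₁*(x+1)) + b₂*(x*d₂) + c₂*((N:ℤ)*d₂^2))*(N:ℤ) := by
      rw [hA₂]
      linear_combination (a₂*(x+1))*hd₁ + (b₂*x + c₂*(y + (N:ℤ)*d₂))*hd₂
    have hA₂N : IsCoprime A₂ (N:ℤ) := by
      have ha₂N : IsCoprime a₂ (N:ℤ) := Int.isCoprime_iff_gcd_eq_one.mpr hgcd₂
      have h2 := ha₂N.add_mul_right_left (a₂*(d₁*(x+1)) + b₂*(x*d₂) + c₂*((N:ℤ)*d₂^2))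
      rwa [← heqA] at h2
    have ha₁N : IsCoprime a₁ (N:ℤ) := Int.isCoprime_iff_gcd_eq_one.mpr hgcd₁
    have hA₂cast : ((A₂ : ℤ) : ZMod N) = (u₂ : ZMod N) := by
      rw [heqA]
      push_cast
      simp only [ZMod.natCast_self, mul_zero, add_zero]
      exact hcast₂
    refine ⟨a₁*A₂, b, C, hprimF, hdiscF, mul_pos ha₁ hposA,
      Int.isCoprime_iff_gcd_eq_one.mp (ha₁N.mul_left hA₂N), ?_⟩
    push_cast
    rw [hcast₁, hA₂cast]
  have hpowS : ∀ (u : (ZMod N)ˣ), u ∈ S → ∀ n : ℕ, u^n ∈ S := by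
    intro u hu n
    induction n with
    | zero => simpa using honeS
    | succ n ih => rw [pow_succ]; exact hmulS _ _ ih hu
  refine ⟨{ carrier := S, one_mem' := honeS, mul_mem' := fun h1 h2 => hmulS _ _ h1 h2,
            inv_mem' := ?_ }, rfl⟩
  intro x hx
  have hord : x ^ orderOf x = 1 := pow_orderOf_eq_one x
  have hpos : 0 < orderOf x := orderOf_pos x
  have hinv : x⁻¹ = x ^ (orderOf x - 1) := by
    apply inv_eq_of_mul_eq_one_right
    rw [← pow_succ', Nat.sub_add_cancel hpos]
    exact hord
  rw [hinv]
  exact hpowS x hx _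
end
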